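/- Let Gₙ = (Vₙ ⊕ Vₙ) ⋊ S₄ where Vₙ = 𝔽₂^{n-1} and S₄ acts through the retraction π: S₄ → S₃ and the S₃-action (12)·(v,w)=(w,v), (13)·(v,w)=(v+w,w), (123)·(v,w)=(v+w,v). Let Hₙ = (Vₙ ⊕ {0})·⟨(1234)⟩ and Kₙ = ({0} ⊕ Vₙ)·{e, (12)(34)}. Then: Hₙ ≅ ℤ₂^{n-1} × ℤ₄, Kₙ ≅ ℤ₂ⁿ is a subgroup of Gₙ, the normalizer of Hₙ in Gₙ is Hₙ ⋊ Kₙ, and Gₙ = Hₙ(123)Hₙ ⊔ ⊔_{k ∈ Kₙ} Hₙ k Hₙ is a disjoint double coset decomposition (with Hₙ ∩ (123)Hₙ(123)^{-1} = {e}, so |Hₙ(123)Hₙ| = 2^{2n+2}). -/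

import Mathlib

open Equiv

abbrev S4 := Equiv.Perm (Fin 4)

/-- the 4-cycle (1234), zero-indexed as (0 1 2 3) -/
def fourCycle : S4 := Equiv.swap 0 1 * Equiv.swap 1 2 * Equiv.swap 2 3

/-- the 3-cycle (123), zero-indexed as (0 1 2) -/
def threeCycle : S4 := Equiv.swap 0 1 * Equiv.swap 1 2

/-- γ₁ = (12)(34), zero-indexed -/
def gamma1 : S4 := Equiv.swap 0 1 * Equiv.swap 2 3

/-- N = {e, (12)(34), (13)(24), (14)(23)} (zero-indexed), as a set. -/
def NSet : Set S4 := {1, Equiv.swap 0 1 * Equiv.swap 2 3, Equiv.swap 0 2 * Equiv.swap 1 3,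
  Equiv.swap 0 3 * Equiv.swap 1 2}

/-- Vₙ = 𝔽₂^{n-1} -/
abbrev V (n : ℕ) := Fin (n - 1) → ZMod 2

/-- Vₙ ⊕ Vₙ, written multiplicatively so that S₄ can act by automorphisms. -/
abbrev W (n : ℕ) := Multiplicative (V n × V n)

/-- the double coset H g H of a subgroup -/
def dcoset {G : Type*} [Group G] (H : Subgroup G) (g : G) : Set G :=
  {x | ∃ h₁ ∈ H, ∃ h₂ ∈ H, x = h₁ * g * h₂}

namespace DCaux

open SemidirectProduct Multiplicative

def inC (s : S4) : Prop := s = 1 ∨ s = fourCycle ∨ s = fourCycle ^ 2 ∨ s = fourCycle ^ 3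
def inK (s : S4) : Prop := s = 1 ∨ s = gamma1
def inD8 (s : S4) : Prop := inC s ∨ inC (s * gamma1)

instance : DecidablePred inC := fun s => by unfold inC; infer_instance
instance : DecidablePred inK := fun s => by unfold inK; infer_instance
instance : DecidablePred inD8 := fun s => by unfold inD8; infer_instance

lemma inC_cases {s : S4} (h : inC s) : ∃ j : Fin 4, s = fourCycle ^ (j : ℕ) := by
  rcases h with rfl | rfl | rfl | rfl
  exacts [⟨0, by decide⟩, ⟨1, by decide⟩, ⟨2, by decide⟩, ⟨3, by decide⟩]

lemma inK_cases {s : S4} (h : inK s) : ∃ j : Fin 2, s = gamma1 ^ (j : ℕ) := by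
  rcases h with rfl | rfl
  exacts [⟨0, by decide⟩, ⟨1, by decide⟩]

section
variable {n : ℕ} {φ : S4 →* MulAut (W n)}

lemma phi_gamma1 (hN : ∀ g ∈ NSet, φ g = 1) : φ gamma1 = 1 :=
  hN _ (by right; left; rfl)

lemma phi_n3 (hN : ∀ g ∈ NSet, φ g = 1) : φ (Equiv.swap 0 3 * Equiv.swap 1 2) = 1 :=
  hN _ (by right; right; right; rfl)

lemma phi_c2 (hN : ∀ g ∈ NSet, φ g = 1) : φ (fourCycle ^ 2) = 1 := by
  have h : (fourCycle : S4) ^ 2 = Equiv.swap 0 2 * Equiv.swap 1 3 := by decide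
  rw [h]; exact hN _ (by right; right; left; rfl)

lemma phi_c (hN : ∀ g ∈ NSet, φ g = 1)
    (h13 : ∀ v w : V n, φ (Equiv.swap 0 2) (Multiplicative.ofAdd (v, w)) =
      Multiplicative.ofAdd (v + w, w)) :
    ∀ u : W n, φ fourCycle u = ofAdd ((toAdd u).1 + (toAdd u).2, (toAdd u).2) := by
  intro u
  have h : fourCycle = (Equiv.swap 0 3 * Equiv.swap 1 2) * Equiv.swap 0 2 := by decide
  have hu : u = ofAdd ((toAdd u).1, (toAdd u).2) := rfl
  rw [h, map_mul, MulAut.mul_apply, hu, h13, phi_n3 hN, MulAut.one_apply]; rfl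

lemma phi_c3 (hN : ∀ g ∈ NSet, φ g = 1)
    (h13 : ∀ v w : V n, φ (Equiv.swap 0 2) (Multiplicative.ofAdd (v, w)) =
      Multiplicative.ofAdd (v + w, w)) :
    ∀ u : W n, φ (fourCycle ^ 3) u = ofAdd ((toAdd u).1 + (toAdd u).2, (toAdd u).2) := by
  intro u
  have h : (fourCycle : S4) ^ 3 = fourCycle ^ 2 * fourCycle := by group
  rw [h, map_mul, MulAut.mul_apply, phi_c hN h13, phi_c2 hN, MulAut.one_apply]

lemma phi_t (h12 : ∀ v w : V n, φ (Equiv.swap 0 1) (Multiplicative.ofAdd (v, w)) =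
      Multiplicative.ofAdd (w, v))
    (h13 : ∀ v w : V n, φ (Equiv.swap 0 2) (Multiplicative.ofAdd (v, w)) =
      Multiplicative.ofAdd (v + w, w)) :
    ∀ u : W n, φ threeCycle u = ofAdd ((toAdd u).1 + (toAdd u).2, (toAdd u).1) := by
  intro u
  have h : threeCycle = Equiv.swap 0 2 * Equiv.swap 0 1 := by decide
  have hu : u = ofAdd ((toAdd u).1, (toAdd u).2) := rfl
  rw [h, map_mul, MulAut.mul_apply, hu, h12, h13, add_comm]; rfl

lemma snd_phi (hN : ∀ g ∈ NSet, φ g = 1)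
    (h13 : ∀ v w : V n, φ (Equiv.swap 0 2) (Multiplicative.ofAdd (v, w)) =
      Multiplicative.ofAdd (v + w, w)) :
    ∀ s : S4, inC s → ∀ u : W n, (toAdd (φ s u)).2 = (toAdd u).2 := by
  rintro s (rfl | rfl | rfl | rfl) u
  · simp
  · rw [phi_c hN h13]; rfl
  · rw [phi_c2 hN]; rfl
  · rw [phi_c3 hN h13]; rfl


lemma snd_phi_D8 (hN : ∀ g ∈ NSet, φ g = 1)
    (h13 : ∀ v w : V n, φ (Equiv.swap 0 2) (Multiplicative.ofAdd (v, w)) =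
      Multiplicative.ofAdd (v + w, w)) :
    ∀ s : S4, inD8 s → ∀ u : W n, (toAdd (φ s u)).2 = (toAdd u).2 := by
  rintro s (hs | hs) u
  · exact snd_phi hN h13 s hs u
  · have h1 : s = (s * gamma1) * gamma1 := by
      rw [mul_assoc, (by decide : gamma1 * gamma1 = (1 : S4)), mul_one]
    rw [h1, map_mul, MulAut.mul_apply, phi_gamma1 hN, MulAut.one_apply]
    exact snd_phi hN h13 _ hs u

lemma phi_inK (hN : ∀ g ∈ NSet, φ g = 1) {s : S4} (h : inK s) : φ s = 1 := by
  rcases h with rfl | rfl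
  · exact map_one φ
  · exact phi_gamma1 hN

lemma phi_cpow (hN : ∀ g ∈ NSet, φ g = 1)
    (h13 : ∀ v w : V n, φ (Equiv.swap 0 2) (Multiplicative.ofAdd (v, w)) =
      Multiplicative.ofAdd (v + w, w)) :
    ∀ (m : ℕ) (v : V n), φ (fourCycle ^ m) (ofAdd (v, 0)) = ofAdd (v, 0) := by
  intro m v
  induction m with
  | zero => simp
  | succ k ih =>
    rw [pow_succ', map_mul, MulAut.mul_apply]
    have : φ fourCycle (ofAdd (v, (0 : V n))) = ofAdd (v, 0) := by
      rw [phi_c hN h13]; simp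
    rw [ih, this]

lemma phi_gpow (hN : ∀ g ∈ NSet, φ g = 1) : ∀ m : ℕ, φ (gamma1 ^ m) = 1 := by
  intro m; rw [map_pow, phi_gamma1 hN, one_pow]

/-- the parametrization of Hₙ -/
def fmap (hN : ∀ g ∈ NSet, φ g = 1)
    (h13 : ∀ v w : V n, φ (Equiv.swap 0 2) (Multiplicative.ofAdd (v, w)) =
      Multiplicative.ofAdd (v + w, w)) :
    Multiplicative (V n × ZMod 4) →* W n ⋊[φ] S4 :=
  MonoidHom.mk' (fun q => ⟨ofAdd ((toAdd q).1, 0), fourCycle ^ ((toAdd q).2.val)⟩) (by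
    intro q p
    have h4 : (fourCycle : S4) ^ (4 : ℕ) = 1 := by decide
    refine SemidirectProduct.ext ?_ ?_
    · show ofAdd ((toAdd (q * p)).1, (0 : V n)) =
        ofAdd ((toAdd q).1, 0) * φ (fourCycle ^ ((toAdd q).2.val)) (ofAdd ((toAdd p).1, 0))
      rw [phi_cpow hN h13, ← ofAdd_add]
      refine congrArg ofAdd ?_
      exact Prod.ext rfl (by simp)
    · show fourCycle ^ ((toAdd (q * p)).2.val) = fourCycle ^ _ * fourCycle ^ _
      rw [← pow_add]
      have h2 : (toAdd (q * p)).2 = (toAdd q).2 + (toAdd p).2 := rfl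
      rw [h2, ZMod.val_add, ← pow_eq_pow_mod _ h4])

lemma fmap_apply (hN : ∀ g ∈ NSet, φ g = 1)
    (h13 : ∀ v w : V n, φ (Equiv.swap 0 2) (Multiplicative.ofAdd (v, w)) =
      Multiplicative.ofAdd (v + w, w)) (q : Multiplicative (V n × ZMod 4)) :
    fmap hN h13 q = ⟨ofAdd ((toAdd q).1, 0), fourCycle ^ ((toAdd q).2.val)⟩ := rfl

lemma fmap_inj (hN : ∀ g ∈ NSet, φ g = 1)
    (h13 : ∀ v w : V n, φ (Equiv.swap 0 2) (Multiplicative.ofAdd (v, w)) =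
      Multiplicative.ofAdd (v + w, w)) :
    Function.Injective (fmap hN h13) := by
  intro q p h
  rw [fmap_apply, fmap_apply] at h
  have hl := congrArg SemidirectProduct.left h
  have hr := congrArg SemidirectProduct.right h
  simp only at hl hr
  have h1 : (toAdd q).1 = (toAdd p).1 := congrArg (fun x => (toAdd x).1) hl
  have h2 : (toAdd q).2 = (toAdd p).2 :=
    (by decide : ∀ a b : ZMod 4, fourCycle ^ a.val = fourCycle ^ b.val → a = b) _ _ hr
  exact Multiplicative.toAdd.injective (Prod.ext h1 h2)

lemma fmap_range (hN : ∀ g ∈ NSet, φ g = 1)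
    (h13 : ∀ v w : V n, φ (Equiv.swap 0 2) (Multiplicative.ofAdd (v, w)) =
      Multiplicative.ofAdd (v + w, w)) :
    ((fmap hN h13).range : Set (W n ⋊[φ] S4)) =
      {x | (toAdd x.left).2 = 0 ∧ inC x.right} := by
  ext x
  simp only [SetLike.mem_coe, MonoidHom.mem_range, Set.mem_setOf_eq]
  constructor
  · rintro ⟨q, rfl⟩
    rw [fmap_apply]
    exact ⟨rfl, (by decide : ∀ j : ZMod 4, inC (fourCycle ^ j.val)) _⟩
  · rintro ⟨h1, h2⟩
    obtain ⟨j, hj⟩ := inC_cases h2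
    refine ⟨ofAdd ((toAdd x.left).1, ((j : ℕ) : ZMod 4)), ?_⟩
    rw [fmap_apply]
    refine SemidirectProduct.ext ?_ ?_
    · show ofAdd ((toAdd x.left).1, (0 : V n)) = x.left
      conv_rhs => rw [← ofAdd_toAdd x.left]
      congr 1
      exact Prod.ext rfl h1.symm
    · show fourCycle ^ (((j : ℕ) : ZMod 4).val) = x.right
      rw [hj]
      congr 1
      exact (by decide : ∀ j : Fin 4, (((j : ℕ) : ZMod 4).val) = (j : ℕ)) j

/-- the parametrization of Kₙ -/
def gmap (hN : ∀ g ∈ NSet, φ g = 1) :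
    Multiplicative (V n × ZMod 2) →* W n ⋊[φ] S4 :=
  MonoidHom.mk' (fun p => ⟨ofAdd (0, (toAdd p).1), gamma1 ^ ((toAdd p).2.val)⟩) (by
    intro q p
    have h2 : (gamma1 : S4) ^ (2 : ℕ) = 1 := by decide
    refine SemidirectProduct.ext ?_ ?_
    · show ofAdd ((0 : V n), (toAdd (q * p)).1) =
        ofAdd (0, (toAdd q).1) * φ (gamma1 ^ ((toAdd q).2.val)) (ofAdd (0, (toAdd p).1))
      rw [phi_gpow hN, MulAut.one_apply, ← ofAdd_add]
      refine congrArg ofAdd ?_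
      exact Prod.ext (by simp) rfl
    · show gamma1 ^ ((toAdd (q * p)).2.val) = gamma1 ^ _ * gamma1 ^ _
      rw [← pow_add]
      have he : (toAdd (q * p)).2 = (toAdd q).2 + (toAdd p).2 := rfl
      rw [he, ZMod.val_add, ← pow_eq_pow_mod _ h2])

lemma gmap_apply (hN : ∀ g ∈ NSet, φ g = 1) (p : Multiplicative (V n × ZMod 2)) :
    gmap (φ := φ) hN p = ⟨ofAdd (0, (toAdd p).1), gamma1 ^ ((toAdd p).2.val)⟩ := rfl

lemma gmap_inj (hN : ∀ g ∈ NSet, φ g = 1) :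
    Function.Injective (gmap (φ := φ) hN) := by
  intro q p h
  rw [gmap_apply, gmap_apply] at h
  have hl := congrArg SemidirectProduct.left h
  have hr := congrArg SemidirectProduct.right h
  simp only at hl hr
  have h1 : (toAdd q).1 = (toAdd p).1 := congrArg (fun x => (toAdd x).2) hl
  have h2 : (toAdd q).2 = (toAdd p).2 :=
    (by decide : ∀ a b : ZMod 2, gamma1 ^ a.val = gamma1 ^ b.val → a = b) _ _ hr
  exact Multiplicative.toAdd.injective (Prod.ext h1 h2)

lemma gmap_range (hN : ∀ g ∈ NSet, φ g = 1) :
    ((gmap (φ := φ) hN).range : Set (W n ⋊[φ] S4)) =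
      {x | (toAdd x.left).1 = 0 ∧ inK x.right} := by
  ext x
  simp only [SetLike.mem_coe, MonoidHom.mem_range, Set.mem_setOf_eq]
  constructor
  · rintro ⟨q, rfl⟩
    rw [gmap_apply]
    exact ⟨rfl, (by decide : ∀ j : ZMod 2, inK (gamma1 ^ j.val)) _⟩
  · rintro ⟨h1, h2⟩
    obtain ⟨j, hj⟩ := inK_cases h2
    refine ⟨ofAdd ((toAdd x.left).2, ((j : ℕ) : ZMod 2)), ?_⟩
    rw [gmap_apply]
    refine SemidirectProduct.ext ?_ ?_
    · show ofAdd ((0 : V n), (toAdd x.left).2) = x.left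
      conv_rhs => rw [← ofAdd_toAdd x.left]
      congr 1
      exact Prod.ext h1.symm rfl
    · show gamma1 ^ (((j : ℕ) : ZMod 2).val) = x.right
      rw [hj]
      congr 1
      exact (by decide : ∀ j : Fin 2, (((j : ℕ) : ZMod 2).val) = (j : ℕ)) j

lemma inC_zpow (z : ℤ) : inC (fourCycle ^ z) := by
  have h4 : (fourCycle : S4) ^ (4 : ℤ) = 1 := by
    rw [show (4 : ℤ) = ((4 : ℕ) : ℤ) from rfl, zpow_natCast]; decide
  have hz : fourCycle ^ z = fourCycle ^ (z % 4) := by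
    conv_lhs => rw [← Int.mul_ediv_add_emod z 4]
    rw [zpow_add, zpow_mul, h4, one_zpow, one_mul]
  rw [hz]
  have h0 : 0 ≤ z % 4 := Int.emod_nonneg z (by norm_num)
  have h4' : z % 4 < 4 := Int.emod_lt_of_pos z (by norm_num)
  rcases (by omega : z % 4 = 0 ∨ z % 4 = 1 ∨ z % 4 = 2 ∨ z % 4 = 3) with h | h | h | h <;> rw [h]
  · rw [show (0 : ℤ) = ((0 : ℕ) : ℤ) from rfl, zpow_natCast]; decide
  · rw [show (1 : ℤ) = ((1 : ℕ) : ℤ) from rfl, zpow_natCast]; decide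
  · rw [show (2 : ℤ) = ((2 : ℕ) : ℤ) from rfl, zpow_natCast]; decide
  · rw [show (3 : ℤ) = ((3 : ℕ) : ℤ) from rfl, zpow_natCast]; decide

end
end DCaux

set_option maxHeartbeats 1000000 in
/-- Given an action φ of S₄ on Vₙ ⊕ Vₙ factoring through π : S₄ → S₃ (trivial
on the Klein four-group N, with (12)·(v,w) = (w,v) and (13)·(v,w) = (v+w,w)),
form Gₙ = (Vₙ ⊕ Vₙ) ⋊ S₄.  Let Hₙ = (Vₙ ⊕ 0)⟨(1234)⟩ and
Kₙ = (0 ⊕ Vₙ){e, (12)(34)}.  Then Hₙ ≅ ℤ₂^{n-1} × ℤ₄ and Kₙ ≅ ℤ₂ⁿ are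
subgroups of Gₙ, the normalizer of Hₙ is Hₙ ⋊ Kₙ, and
Gₙ = Hₙ(123)Hₙ ⊔ ⊔_{k ∈ Kₙ} HₙkHₙ is a disjoint double coset decomposition,
with Hₙ ∩ (123)Hₙ(123)⁻¹ = {e} and |Hₙ(123)Hₙ| = 2^{2n+2}. -/


theorem double_coset_structure_general (n : ℕ) (hn : 1 ≤ n)
    (φ : S4 →* MulAut (W n))
    (hN : ∀ g ∈ NSet, φ g = 1)
    (h12 : ∀ v w : V n, φ (Equiv.swap 0 1) (Multiplicative.ofAdd (v, w)) =
      Multiplicative.ofAdd (w, v))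
    (h13 : ∀ v w : V n, φ (Equiv.swap 0 2) (Multiplicative.ofAdd (v, w)) =
      Multiplicative.ofAdd (v + w, w)) :
    ∃ Hn Kn : Subgroup (W n ⋊[φ] S4),
      ((Hn : Set (W n ⋊[φ] S4)) =
        {x | ∃ (v : V n) (z : ℤ), x =
          SemidirectProduct.inl (Multiplicative.ofAdd (v, 0)) *
            SemidirectProduct.inr (fourCycle ^ z)}) ∧
      ((Kn : Set (W n ⋊[φ] S4)) =
        {x | ∃ (w : V n) (k : S4), (k = 1 ∨ k = gamma1) ∧ x =
          SemidirectProduct.inl (Multiplicative.ofAdd (0, w)) *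
            SemidirectProduct.inr k}) ∧
      Nonempty (Hn ≃* Multiplicative ((Fin (n - 1) → ZMod 2) × ZMod 4)) ∧
      Nonempty (Kn ≃* Multiplicative (Fin n → ZMod 2)) ∧
      Subgroup.normalizer (Hn : Set (W n ⋊[φ] S4)) = Hn ⊔ Kn ∧ Hn ⊓ Kn = ⊥ ∧
      ((Hn : Set (W n ⋊[φ] S4)) ∩
        ((fun x => SemidirectProduct.inr threeCycle * x *
          (SemidirectProduct.inr (G := S4) threeCycle)⁻¹) '' (Hn : Set (W n ⋊[φ] S4))) = {1}) ∧
      (dcoset Hn (SemidirectProduct.inr threeCycle)).ncard = 2 ^ (2 * n + 2) ∧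
      (∀ k ∈ Kn, dcoset Hn (SemidirectProduct.inr threeCycle) ∩ dcoset Hn k = ∅) ∧
      (∀ k₁ ∈ Kn, ∀ k₂ ∈ Kn, k₁ ≠ k₂ → dcoset Hn k₁ ∩ dcoset Hn k₂ = ∅) ∧
      (dcoset Hn (SemidirectProduct.inr threeCycle) ∪
        ⋃ k ∈ Kn, dcoset Hn k) = Set.univ := by
  classical
  obtain ⟨m, rfl⟩ : ∃ m, n = m + 1 := ⟨n - 1, (Nat.succ_pred_eq_of_pos hn).symm⟩
  clear hn
  set T : W (m+1) ⋊[φ] S4 := SemidirectProduct.inr threeCycle with hT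
  set f : Multiplicative (V (m+1) × ZMod 4) →* W (m+1) ⋊[φ] S4 := DCaux.fmap hN h13 with hf
  set g : Multiplicative (V (m+1) × ZMod 2) →* W (m+1) ⋊[φ] S4 := DCaux.gmap hN with hg
  have memH : ∀ x : W (m+1) ⋊[φ] S4,
      x ∈ f.range ↔ ((Multiplicative.toAdd x.left).2 = 0 ∧ DCaux.inC x.right) := by
    intro x
    rw [← SetLike.mem_coe, hf, DCaux.fmap_range]
    exact Iff.rfl
  have memK : ∀ x : W (m+1) ⋊[φ] S4,
      x ∈ g.range ↔ ((Multiplicative.toAdd x.left).1 = 0 ∧ DCaux.inK x.right) := by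
    intro x
    rw [← SetLike.mem_coe, hg, DCaux.gmap_range]
    exact Iff.rfl
  -- decomposition of any element with right part in the dihedral group
  have decomp : ∀ x : W (m+1) ⋊[φ] S4, DCaux.inD8 x.right →
      ∃ h ∈ f.range, ∃ k ∈ g.range, x = h * k := by
    rintro x (hx | hx)
    · set u1 := (Multiplicative.toAdd x.left).1 with hu1
      set u2 := (Multiplicative.toAdd x.left).2 with hu2
      set d := (Multiplicative.toAdd (φ x.right (Multiplicative.ofAdd (0, u2)))).1 with hd
      refine ⟨⟨Multiplicative.ofAdd (u1 - d, 0), x.right⟩, (memH _).2 ⟨rfl, hx⟩,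
        ⟨Multiplicative.ofAdd (0, u2), 1⟩, (memK _).2 ⟨rfl, Or.inl rfl⟩, ?_⟩
      refine (SemidirectProduct.ext ?_ ?_).symm
      · refine Multiplicative.toAdd.injective (Prod.ext ?_ ?_)
        · show u1 - d + d = u1
          exact sub_add_cancel _ _
        · show 0 + (Multiplicative.toAdd (φ x.right (Multiplicative.ofAdd (0, u2)))).2 = u2
          rw [DCaux.snd_phi hN h13 _ hx, toAdd_ofAdd, zero_add]
      · exact mul_one x.right
    · set u1 := (Multiplicative.toAdd x.left).1 with hu1
      set u2 := (Multiplicative.toAdd x.left).2 with hu2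
      set d := (Multiplicative.toAdd (φ (x.right * gamma1)
        (Multiplicative.ofAdd (0, u2)))).1 with hd
      refine ⟨⟨Multiplicative.ofAdd (u1 - d, 0), x.right * gamma1⟩, (memH _).2 ⟨rfl, hx⟩,
        ⟨Multiplicative.ofAdd (0, u2), gamma1⟩, (memK _).2 ⟨rfl, Or.inr rfl⟩, ?_⟩
      refine (SemidirectProduct.ext ?_ ?_).symm
      · refine Multiplicative.toAdd.injective (Prod.ext ?_ ?_)
        · show u1 - d + d = u1
          exact sub_add_cancel _ _
        · show 0 + (Multiplicative.toAdd (φ (x.right * gamma1)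
            (Multiplicative.ofAdd (0, u2)))).2 = u2
          rw [DCaux.snd_phi hN h13 _ hx, toAdd_ofAdd, zero_add]
      · show x.right * gamma1 * gamma1 = x.right
        rw [mul_assoc, (by decide : gamma1 * gamma1 = (1 : S4)), mul_one]
  -- conjugation by Kn preserves Hn
  have conjK : ∀ k ∈ g.range, ∀ h ∈ f.range, k * h * k⁻¹ ∈ f.range := by
    intro k hk h hh
    rw [memK] at hk
    rw [memH] at hh
    rw [memH]
    obtain ⟨hk1, hk2⟩ := hk
    obtain ⟨hh1, hh2⟩ := hh
    have hφk : φ k.right = 1 := DCaux.phi_inK hN hk2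
    have hφk' : φ k.right⁻¹ = 1 := by rw [map_inv, hφk, inv_one]
    have hconj : DCaux.inC (k.right * h.right * k.right⁻¹) := by
      rcases hk2 with h' | h' <;> rcases hh2 with h'' | h'' | h'' | h'' <;>
        rw [h', h''] <;> decide
    have hD8 : DCaux.inD8 (k.right * h.right) := by
      rcases hk2 with h' | h' <;> rcases hh2 with h'' | h'' | h'' | h'' <;>
        rw [h', h''] <;> decide
    constructor
    · have e : (k * h * k⁻¹).left =
          k.left * φ k.right h.left * φ (k.right * h.right) (φ k.right⁻¹ k.left⁻¹) := by
        simp only [SemidirectProduct.mul_left, SemidirectProduct.mul_right,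
          SemidirectProduct.inv_left]
      rw [e, hφk, hφk']
      simp only [MulAut.one_apply]
      rw [toAdd_mul, toAdd_mul, Prod.snd_add, Prod.snd_add,
        DCaux.snd_phi_D8 hN h13 _ hD8]
      rw [toAdd_inv, Prod.snd_neg, hh1]
      abel
    · show DCaux.inC (k.right * h.right * k.right⁻¹)
      exact hconj
  -- trivial intersection of Hn and Kn
  have hbot : f.range ⊓ g.range = ⊥ := by
    rw [eq_bot_iff]
    intro x hx
    obtain ⟨hxH, hxK⟩ := Subgroup.mem_inf.1 hx
    rw [memH] at hxH
    rw [memK] at hxK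
    have hr : x.right = 1 :=
      (by decide : ∀ s, DCaux.inC s → DCaux.inK s → s = 1) _ hxH.2 hxK.2
    have hl : x.left = 1 := by
      have h0 : Multiplicative.toAdd x.left = 0 := Prod.ext hxK.1 hxH.1
      rw [← ofAdd_toAdd x.left, h0]
      rfl
    rw [Subgroup.mem_bot]
    exact SemidirectProduct.ext hl hr
  -- trivial conjugate intersection
  have hinter : ((f.range : Set (W (m+1) ⋊[φ] S4)) ∩
      ((fun x => T * x * T⁻¹) '' (f.range : Set (W (m+1) ⋊[φ] S4)))) = {1} := by
    ext x
    simp only [Set.mem_inter_iff, Set.mem_image, SetLike.mem_coe, Set.mem_singleton_iff]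
    constructor
    · rintro ⟨hxH, y, hyH, rfl⟩
      rw [memH] at hxH hyH
      have hr : (T * y * T⁻¹).right = threeCycle * y.right * threeCycle⁻¹ := by
        simp [hT]
      have hy1 : y.right = 1 := by
        refine (by decide : ∀ s, DCaux.inC s → DCaux.inC (threeCycle * s * threeCycle⁻¹) →
          s = 1) _ hyH.2 ?_
        rw [← hr]
        exact hxH.2
      have hl : (T * y * T⁻¹).left = φ threeCycle y.left := by
        simp [hT]
      have h2 := hxH.1
      rw [hl, DCaux.phi_t h12 h13] at h2
      have hy1' : (Multiplicative.toAdd y.left).1 = 0 := h2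
      have hyl : y.left = 1 := by
        have h0 : Multiplicative.toAdd y.left = 0 := Prod.ext hy1' hyH.1
        rw [← ofAdd_toAdd y.left, h0]
        rfl
      have hy : y = 1 := SemidirectProduct.ext hyl hy1
      rw [hy]
      simp
    · rintro rfl
      exact ⟨one_mem _, 1, one_mem _, by simp⟩
  -- normalizer
  have hnorm : Subgroup.normalizer (f.range : Set (W (m+1) ⋊[φ] S4)) = f.range ⊔ g.range := by
    apply le_antisymm
    · intro x hx
      rw [Subgroup.mem_normalizer_iff] at hx
      have hC : (SemidirectProduct.inr fourCycle : W (m+1) ⋊[φ] S4) ∈ f.range := by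
        rw [memH]
        exact ⟨rfl, Or.inr (Or.inl rfl)⟩
      have h2 := (hx (SemidirectProduct.inr fourCycle)).1 hC
      rw [memH] at h2
      have hr : DCaux.inC (x.right * fourCycle * x.right⁻¹) := h2.2
      obtain ⟨j, hj⟩ := DCaux.inC_cases hr
      have hD8 : DCaux.inD8 x.right :=
        (by decide : ∀ (s : S4) (j : Fin 4),
          s * fourCycle * s⁻¹ = fourCycle ^ (j : ℕ) → DCaux.inD8 s) _ j hj
      obtain ⟨h, hh, k, hk, rfl⟩ := decomp x hD8
      exact mul_mem (SetLike.le_def.mp le_sup_left hh) (SetLike.le_def.mp le_sup_right hk)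
    · refine sup_le Subgroup.le_normalizer ?_
      intro k hk
      rw [Subgroup.mem_normalizer_iff]
      intro h
      constructor
      · intro hh
        exact conjK k hk h hh
      · intro hh
        have h1 := conjK k⁻¹ (inv_mem hk) _ hh
        have e : k⁻¹ * (k * h * k⁻¹) * k⁻¹⁻¹ = h := by group
        rwa [e] at h1
  -- carrier of Hn
  have hHcar : (f.range : Set (W (m+1) ⋊[φ] S4)) =
      {x | ∃ (v : V (m+1)) (z : ℤ), x =
        SemidirectProduct.inl (Multiplicative.ofAdd (v, 0)) *
          SemidirectProduct.inr (fourCycle ^ z)} := by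
    rw [hf, DCaux.fmap_range]
    ext x
    simp only [Set.mem_setOf_eq]
    constructor
    · rintro ⟨h1, h2⟩
      obtain ⟨j, hj⟩ := DCaux.inC_cases h2
      refine ⟨(Multiplicative.toAdd x.left).1, (j : ℕ), ?_⟩
      rw [zpow_natCast, ← hj, ← SemidirectProduct.mk_eq_inl_mul_inr]
      refine (SemidirectProduct.ext ?_ ?_).symm
      · show Multiplicative.ofAdd ((Multiplicative.toAdd x.left).1, (0 : V (m+1))) = x.left
        conv_rhs => rw [← ofAdd_toAdd x.left]
        exact congrArg Multiplicative.ofAdd (Prod.ext rfl h1.symm)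
      · rfl
    · rintro ⟨v, z, rfl⟩
      constructor
      · show (Multiplicative.toAdd ((SemidirectProduct.inl (Multiplicative.ofAdd (v, 0)) *
          SemidirectProduct.inr (fourCycle ^ z) : W (m+1) ⋊[φ] S4)).left).2 = 0
        rw [show ((SemidirectProduct.inl (Multiplicative.ofAdd (v, 0)) *
          SemidirectProduct.inr (fourCycle ^ z) : W (m+1) ⋊[φ] S4)).left =
            Multiplicative.ofAdd (v, 0) from by
          simp only [SemidirectProduct.mul_left, SemidirectProduct.left_inl,
            SemidirectProduct.right_inl, SemidirectProduct.left_inr, map_one,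
            MulAut.one_apply, mul_one]]
        rfl
      · show DCaux.inC ((SemidirectProduct.inl (Multiplicative.ofAdd (v, 0)) *
          SemidirectProduct.inr (fourCycle ^ z) : W (m+1) ⋊[φ] S4)).right
        have hr : ((SemidirectProduct.inl (Multiplicative.ofAdd (v, 0)) *
            SemidirectProduct.inr (fourCycle ^ z) : W (m+1) ⋊[φ] S4)).right =
            fourCycle ^ z := by
          simp only [SemidirectProduct.mul_right, SemidirectProduct.right_inl,
            SemidirectProduct.right_inr, one_mul]
        rw [hr]
        exact DCaux.inC_zpow z
  -- carrier of Kn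
  have hKcar : (g.range : Set (W (m+1) ⋊[φ] S4)) =
      {x | ∃ (w : V (m+1)) (k : S4), (k = 1 ∨ k = gamma1) ∧ x =
        SemidirectProduct.inl (Multiplicative.ofAdd (0, w)) * SemidirectProduct.inr k} := by
    rw [hg, DCaux.gmap_range]
    ext x
    simp only [Set.mem_setOf_eq]
    constructor
    · rintro ⟨h1, h2⟩
      refine ⟨(Multiplicative.toAdd x.left).2, x.right, h2, ?_⟩
      rw [← SemidirectProduct.mk_eq_inl_mul_inr]
      refine (SemidirectProduct.ext ?_ ?_).symm
      · show Multiplicative.ofAdd ((0 : V (m+1)), (Multiplicative.toAdd x.left).2) = x.left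
        conv_rhs => rw [← ofAdd_toAdd x.left]
        exact congrArg Multiplicative.ofAdd (Prod.ext h1.symm rfl)
      · rfl
    · rintro ⟨w, k, hk, rfl⟩
      refine ⟨by simp, ?_⟩
      show DCaux.inK ((SemidirectProduct.inl (Multiplicative.ofAdd (0, w)) *
        SemidirectProduct.inr k : W (m+1) ⋊[φ] S4)).right
      have hr : ((SemidirectProduct.inl (Multiplicative.ofAdd (0, w)) *
          SemidirectProduct.inr k : W (m+1) ⋊[φ] S4)).right = k := by simp
      rw [hr]
      exact hk
  -- cardinality of Hn
  have hcardH : Nat.card f.range = 2 ^ m * 4 := by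
    rw [Nat.card_congr (MonoidHom.ofInjective (DCaux.fmap_inj hN h13)).toEquiv.symm]
    rw [Nat.card_congr Multiplicative.toAdd, Nat.card_prod]
    rw [Nat.card_fun]
    simp [Nat.card_eq_fintype_card, ZMod.card]
  -- double coset HTH as a range
  have hHtH : dcoset f.range T = Set.range
      (fun p : f.range × f.range => (p.1 : W (m+1) ⋊[φ] S4) * T * p.2) := by
    ext x
    constructor
    · rintro ⟨h₁, m₁, h₂, m₂, rfl⟩
      exact ⟨⟨⟨h₁, m₁⟩, ⟨h₂, m₂⟩⟩, rfl⟩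
    · rintro ⟨⟨⟨h₁, m₁⟩, ⟨h₂, m₂⟩⟩, rfl⟩
      exact ⟨h₁, m₁, h₂, m₂, rfl⟩
  have hinj2 : Function.Injective
      (fun p : f.range × f.range => (p.1 : W (m+1) ⋊[φ] S4) * T * p.2) := by
    intro p q h
    dsimp only at h
    have key : ((q.1 : W (m+1) ⋊[φ] S4))⁻¹ * p.1 =
        T * ((q.2 : W (m+1) ⋊[φ] S4) * (p.2 : W (m+1) ⋊[φ] S4)⁻¹) * T⁻¹ := by
      calc ((q.1 : W (m+1) ⋊[φ] S4))⁻¹ * p.1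
          = (q.1 : W (m+1) ⋊[φ] S4)⁻¹ * ((p.1 : W (m+1) ⋊[φ] S4) * T * p.2) *
            ((p.2 : W (m+1) ⋊[φ] S4)⁻¹ * T⁻¹) * (T * (p.2 : W (m+1) ⋊[φ] S4) *
            (p.2 : W (m+1) ⋊[φ] S4)⁻¹ * T⁻¹) := by group
        _ = (q.1 : W (m+1) ⋊[φ] S4)⁻¹ * ((q.1 : W (m+1) ⋊[φ] S4) * T * q.2) *
            ((p.2 : W (m+1) ⋊[φ] S4)⁻¹ * T⁻¹) * (T * (p.2 : W (m+1) ⋊[φ] S4) *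
            (p.2 : W (m+1) ⋊[φ] S4)⁻¹ * T⁻¹) := by rw [h]
        _ = T * ((q.2 : W (m+1) ⋊[φ] S4) * (p.2 : W (m+1) ⋊[φ] S4)⁻¹) * T⁻¹ := by group
    have hzH : ((q.1 : W (m+1) ⋊[φ] S4))⁻¹ * p.1 ∈ f.range := mul_mem (inv_mem q.1.2) p.1.2
    have hzI : ((q.1 : W (m+1) ⋊[φ] S4))⁻¹ * p.1 ∈
        (fun x => T * x * T⁻¹) '' (f.range : Set (W (m+1) ⋊[φ] S4)) :=
      ⟨(q.2 : W (m+1) ⋊[φ] S4) * (p.2 : W (m+1) ⋊[φ] S4)⁻¹,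
        mul_mem q.2.2 (inv_mem p.2.2), key.symm⟩
    have hz1 : ((q.1 : W (m+1) ⋊[φ] S4))⁻¹ * p.1 = 1 := by
      have hmem : ((q.1 : W (m+1) ⋊[φ] S4))⁻¹ * p.1 ∈ ({1} : Set (W (m+1) ⋊[φ] S4)) := by
        rw [← hinter]
        exact ⟨hzH, hzI⟩
      exact hmem
    have hq1 : (q.1 : W (m+1) ⋊[φ] S4) = p.1 := inv_mul_eq_one.mp hz1
    have hp2 : p.2 = q.2 := by
      have h' : (p.1 : W (m+1) ⋊[φ] S4) * T * p.2 = (p.1 : W (m+1) ⋊[φ] S4) * T * q.2 := by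
        rw [h, hq1]
      exact Subtype.ext (mul_left_cancel h')
    exact Prod.ext (Subtype.ext hq1.symm) hp2
  have hncard : (dcoset f.range T).ncard = 2 ^ (2 * (m + 1) + 2) := by
    rw [hHtH, ← Nat.card_coe_set_eq, Nat.card_range_of_injective hinj2,
      Nat.card_prod, hcardH]
    ring
  -- disjointness of HTH from the HkH
  have hdisj1 : ∀ k ∈ g.range, dcoset f.range T ∩ dcoset f.range k = ∅ := by
    intro k hk
    rw [Set.eq_empty_iff_forall_notMem]
    rintro x ⟨⟨a₁, ha₁, a₂, ha₂, he1⟩, ⟨b₁, hb₁, b₂, hb₂, he2⟩⟩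
    rw [memH] at ha₁ ha₂ hb₁ hb₂
    rw [memK] at hk
    obtain ⟨i1, hi1⟩ := DCaux.inC_cases ha₁.2
    obtain ⟨i2, hi2⟩ := DCaux.inC_cases ha₂.2
    obtain ⟨i3, hi3⟩ := DCaux.inC_cases hb₁.2
    obtain ⟨i4, hi4⟩ := DCaux.inC_cases hb₂.2
    obtain ⟨e, he⟩ := DCaux.inK_cases hk.2
    have hr' : a₁.right * threeCycle * a₂.right = b₁.right * k.right * b₂.right :=
      congrArg SemidirectProduct.right (he1.symm.trans he2)
    rw [hi1, hi2, hi3, hi4, he] at hr'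
    exact (by decide : ∀ (a b c d : Fin 4) (e : Fin 2),
      fourCycle ^ (a : ℕ) * threeCycle * fourCycle ^ (b : ℕ) ≠
        fourCycle ^ (c : ℕ) * gamma1 ^ (e : ℕ) * fourCycle ^ (d : ℕ)) i1 i2 i3 i4 e hr'
  -- disjointness of the HkH
  have hdisj2 : ∀ k₁ ∈ g.range, ∀ k₂ ∈ g.range, k₁ ≠ k₂ →
      dcoset f.range k₁ ∩ dcoset f.range k₂ = ∅ := by
    intro k₁ hk₁ k₂ hk₂ hne
    rw [Set.eq_empty_iff_forall_notMem]
    rintro x ⟨⟨a₁, ha₁, a₂, ha₂, he1⟩, ⟨b₁, hb₁, b₂, hb₂, he2⟩⟩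
    apply hne
    have hA : a₁ * (k₁ * a₂ * k₁⁻¹) ∈ f.range := mul_mem ha₁ (conjK _ hk₁ _ ha₂)
    have hB : b₁ * (k₂ * b₂ * k₂⁻¹) ∈ f.range := mul_mem hb₁ (conjK _ hk₂ _ hb₂)
    have e1 : x = (a₁ * (k₁ * a₂ * k₁⁻¹)) * k₁ := by rw [he1]; group
    have e2 : x = (b₁ * (k₂ * b₂ * k₂⁻¹)) * k₂ := by rw [he2]; group
    have h12' : (a₁ * (k₁ * a₂ * k₁⁻¹)) * k₁ = (b₁ * (k₂ * b₂ * k₂⁻¹)) * k₂ :=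
      e1.symm.trans e2
    have key : k₂ * k₁⁻¹ = (b₁ * (k₂ * b₂ * k₂⁻¹))⁻¹ * (a₁ * (k₁ * a₂ * k₁⁻¹)) := by
      calc k₂ * k₁⁻¹
          = (b₁ * (k₂ * b₂ * k₂⁻¹))⁻¹ * ((b₁ * (k₂ * b₂ * k₂⁻¹)) * k₂) * k₁⁻¹ := by group
        _ = (b₁ * (k₂ * b₂ * k₂⁻¹))⁻¹ * ((a₁ * (k₁ * a₂ * k₁⁻¹)) * k₁) * k₁⁻¹ := by
            rw [h12']
        _ = (b₁ * (k₂ * b₂ * k₂⁻¹))⁻¹ * (a₁ * (k₁ * a₂ * k₁⁻¹)) := by group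
    have hz : k₂ * k₁⁻¹ ∈ f.range ⊓ g.range :=
      Subgroup.mem_inf.2 ⟨key ▸ mul_mem (inv_mem hB) hA, mul_mem hk₂ (inv_mem hk₁)⟩
    rw [hbot, Subgroup.mem_bot] at hz
    exact (mul_inv_eq_one.mp hz).symm
  -- the union is everything
  have hunion : (dcoset f.range T ∪ ⋃ k ∈ g.range, dcoset f.range k) = Set.univ := by
    rw [Set.eq_univ_iff_forall]
    intro x
    by_cases hD : DCaux.inD8 x.right
    · obtain ⟨h, hh, k, hk, rfl⟩ := decomp x hD
      refine Set.mem_union_right _ ?_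
      exact Set.mem_iUnion₂.2 ⟨k, hk, ⟨h, hh, 1, one_mem _, by rw [mul_one]⟩⟩
    · refine Set.mem_union_left _ ?_
      obtain ⟨a, b, hs⟩ := (by decide : ∀ s : S4, ¬ DCaux.inD8 s →
        ∃ a b : Fin 4, s = fourCycle ^ (a : ℕ) * threeCycle * fourCycle ^ (b : ℕ)) _ hD
      have hCa : DCaux.inC (fourCycle ^ ((a : ℕ))) :=
        (by decide : ∀ j : Fin 4, DCaux.inC (fourCycle ^ (j : ℕ))) a
      have hCb : DCaux.inC (fourCycle ^ ((b : ℕ))) :=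
        (by decide : ∀ j : Fin 4, DCaux.inC (fourCycle ^ (j : ℕ))) b
      set u1 := (Multiplicative.toAdd x.left).1 with hu1
      set u2 := (Multiplicative.toAdd x.left).2 with hu2
      set d := (Multiplicative.toAdd (φ (fourCycle ^ (a : ℕ))
        (Multiplicative.ofAdd (u2, u2)))).1 with hd
      refine ⟨⟨Multiplicative.ofAdd (u1 - d, 0), fourCycle ^ (a : ℕ)⟩,
        (memH _).2 ⟨rfl, hCa⟩,
        ⟨Multiplicative.ofAdd (u2, 0), fourCycle ^ (b : ℕ)⟩,
        (memH _).2 ⟨rfl, hCb⟩, ?_⟩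
      refine (SemidirectProduct.ext ?_ ?_).symm
      · show Multiplicative.ofAdd (u1 - d, 0) * φ (fourCycle ^ (a : ℕ)) 1 *
          φ (fourCycle ^ (a : ℕ) * threeCycle) (Multiplicative.ofAdd (u2, 0)) = x.left
        rw [map_one, mul_one, map_mul, MulAut.mul_apply, DCaux.phi_t h12 h13]
        simp only [toAdd_ofAdd, add_zero]
        refine Multiplicative.toAdd.injective (Prod.ext ?_ ?_)
        · show u1 - d + d = u1
          exact sub_add_cancel _ _
        · show 0 + (Multiplicative.toAdd (φ (fourCycle ^ (a : ℕ))
            (Multiplicative.ofAdd (u2, u2)))).2 = u2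
          rw [DCaux.snd_phi hN h13 _ hCa, toAdd_ofAdd, zero_add]
      · show fourCycle ^ (a : ℕ) * threeCycle * fourCycle ^ (b : ℕ) = x.right
        exact hs.symm
  -- additive equivalence for the Kn side
  have e2 : ((Fin m → ZMod 2) × ZMod 2) ≃+ (Fin (m+1) → ZMod 2) :=
    { toFun := fun p => Fin.cons p.2 p.1
      invFun := fun q => (fun i => q i.succ, q 0)
      left_inv := fun p => by
        refine Prod.ext (funext fun i => ?_) ?_ <;> simp
      right_inv := fun q => by
        funext i
        cases i using Fin.cases <;> simp
      map_add' := fun p q => by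
        funext i
        cases i using Fin.cases <;> simp }
  exact ⟨f.range, g.range, hHcar, hKcar,
    ⟨(MonoidHom.ofInjective (DCaux.fmap_inj hN h13)).symm⟩,
    ⟨((MonoidHom.ofInjective (DCaux.gmap_inj hN)).symm.trans
      (AddEquiv.toMultiplicative e2))⟩,
    hnorm, hbot, hinter, hncard, hdisj1, hdisj2, hunion⟩
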